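/- Let A be a filtered k-algebra and 0 → B → C → D → 0 an exact sequence of filtered A-modules with strict maps (so 0 → F^n B → F^n C → F^n D → 0 is exact for all n), where B, C, D all lie in AF_A. Then the dual sequence 0 → D* → C* → B* → 0 is exact, and is strict for the induced filtrations on the duals. -/

import Mathlib

/-- `C` with filtration `FC` lies in the category `AF_A`: the filtration is a descending,
finite filtration of `A`-submodules, and each graded piece `F^n C / F^{n+1} C` is a
finitely generated projective `k`-module. -/
def IsAF (k : Type*) [CommRing k] {A : Type*} [CommRing A] [Algebra k A]
    {C : Type*} [AddCommGroup C] [Module k C] [Module A C] [IsScalarTower k A C]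
    (FC : ℤ → Submodule A C) : Prop :=
  Antitone FC ∧ (∃ n0 : ℤ, ∀ n ≤ n0, FC n = ⊤) ∧ (∃ n1 : ℤ, ∀ n ≥ n1, FC n = ⊥) ∧
  ∀ n : ℤ, Module.Finite k (↥(FC n) ⧸ (FC (n + 1)).comap (FC n).subtype) ∧
    Module.Projective k (↥(FC n) ⧸ (FC (n + 1)).comap (FC n).subtype)


/-- An extension of a projective module by a projective module is projective. -/
theorem projective_of_ses' {k M Q : Type*} [CommRing k] [AddCommGroup M] [Module k M]
    [AddCommGroup Q] [Module k Q] (π : M →ₗ[k] Q) (hπ : Function.Surjective π)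
    (hQ : Module.Projective k Q) (hker : Module.Projective k ↥(LinearMap.ker π)) :
    Module.Projective k M := by
  haveI := hQ; haveI := hker
  obtain ⟨s, hs⟩ := Module.projective_lifting_property π LinearMap.id hπ
  have hmem : ∀ m : M, m - s (π m) ∈ LinearMap.ker π := fun m => by
    have := LinearMap.congr_fun hs (π m)
    simp only [LinearMap.coe_comp, Function.comp_apply, LinearMap.id_apply] at this
    simp [LinearMap.mem_ker, map_sub, this]
  refine Module.Projective.of_split
    (LinearMap.prod (LinearMap.codRestrict _ (LinearMap.id - s ∘ₗ π) hmem) π)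
    ((LinearMap.ker π).subtype.coprod s) ?_
  ext m
  simp [LinearMap.codRestrict, sub_add_cancel]


/-- Transport projectivity of the graded piece `p/q` (as an `A`-module quotient) to the
`k`-submodule `map (q.restrictScalars k).mkQ (p.restrictScalars k)`. -/
theorem proj_piece {k A M : Type*} [CommRing k] [CommRing A] [Algebra k A]
    [AddCommGroup M] [Module k M] [Module A M] [IsScalarTower k A M]
    (p q : Submodule A M)
    (hp : Module.Projective k (↥p ⧸ q.comap p.subtype)) :
    Module.Projective k
      ↥(Submodule.map ((q.restrictScalars k)).mkQ (p.restrictScalars k)) := by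
  haveI := hp
  set q' := q.restrictScalars k with hq'
  set p' := p.restrictScalars k with hp'
  set r := q.comap p.subtype with hr
  have hφmem : ∀ x : ↥p, q'.mkQ ((p.subtype.restrictScalars k) x) ∈ Submodule.map q'.mkQ p' :=
    fun x => Submodule.mem_map_of_mem x.2
  set φ : ↥p →ₗ[k] ↥(Submodule.map q'.mkQ p') :=
    LinearMap.codRestrict _ (q'.mkQ ∘ₗ (p.subtype.restrictScalars k)) hφmem with hφ
  have hφval : ∀ x : ↥p, (φ x : M ⧸ q') = Submodule.Quotient.mk (x : M) := fun x => rfl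
  have hkerφ : LinearMap.ker φ = r.restrictScalars k := by
    ext x
    constructor
    · intro hx
      have : (φ x : M ⧸ q') = 0 := by
        rw [LinearMap.mem_ker] at hx; rw [hx]; rfl
      rw [hφval, Submodule.Quotient.mk_eq_zero] at this
      exact this
    · intro hx
      have : (x : M) ∈ q := hx
      rw [LinearMap.mem_ker]
      apply Subtype.ext
      simp only [hφval, ZeroMemClass.coe_zero, Submodule.Quotient.mk_eq_zero]
      exact this
  set ψ := (r.restrictScalars k).liftQ φ hkerφ.ge with hψ
  have hinj : Function.Injective ψ := by
    rw [← LinearMap.ker_eq_bot]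
    exact Submodule.ker_liftQ_eq_bot _ _ _ hkerφ.le
  have hsurj : Function.Surjective ψ := by
    rintro ⟨y, hy⟩
    obtain ⟨x, hx, rfl⟩ := hy
    refine ⟨Submodule.Quotient.mk (⟨x, hx⟩ : ↥p), ?_⟩
    apply Subtype.ext
    rw [hψ, Submodule.liftQ_apply, hφval]
    rfl
  exact Module.Projective.of_equiv
    ((Submodule.Quotient.restrictScalarsEquiv k r).symm.trans
      (LinearEquiv.ofBijective ψ ⟨hinj, hsurj⟩))



theorem proj_quot {k M : Type*} [CommRing k] [AddCommGroup M] [Module k M]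
    (F : ℤ → Submodule k M) (hanti : Antitone F) (n0 : ℤ) (h0 : ∀ n ≤ n0, F n = ⊤)
    (hproj : ∀ n : ℤ, Module.Projective k ↥(Submodule.map (F (n + 1)).mkQ (F n)))
    (m : ℤ) : Module.Projective k (M ⧸ F m) := by
  have base : ∀ i ≤ n0, Module.Projective k (M ⧸ F i) := by
    intro i hi
    haveI : Subsingleton (M ⧸ F i) :=
      Submodule.Quotient.subsingleton_iff.2 (h0 i hi)
    exact Module.Projective.of_basis (Module.Basis.empty (ι := Empty) _)
  rcases le_or_gt m n0 with hm | hm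
  · exact base m hm
  · have key : ∀ i, n0 ≤ i → Module.Projective k (M ⧸ F i) := by
      refine Int.le_induction (motive := fun i _ => Module.Projective k (M ⧸ F i))
        (base n0 le_rfl) ?_
      intro i hi ih
      set π : (M ⧸ F (i + 1)) →ₗ[k] (M ⧸ F i) :=
        (F (i + 1)).mapQ (F i) LinearMap.id
          (fun x hx => hanti (by omega : i ≤ i + 1) hx) with hπdef
      have hπmk : ∀ x : M, π (Submodule.Quotient.mk x) = Submodule.Quotient.mk x :=
        fun x => rfl
      have hπsurj : Function.Surjective π := by
        intro y
        obtain ⟨x, rfl⟩ := Submodule.Quotient.mk_surjective _ y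
        exact ⟨Submodule.Quotient.mk x, hπmk x⟩
      have hker : LinearMap.ker π = Submodule.map (F (i + 1)).mkQ (F i) := by
        ext y
        obtain ⟨x, rfl⟩ := Submodule.Quotient.mk_surjective _ y
        constructor
        · intro hy
          rw [LinearMap.mem_ker, hπmk, Submodule.Quotient.mk_eq_zero] at hy
          exact ⟨x, hy, rfl⟩
        · rintro ⟨z, hz, hzx⟩
          rw [LinearMap.mem_ker]
          have : (Submodule.Quotient.mk z : M ⧸ F (i+1)) = Submodule.Quotient.mk x := hzx
          rw [← this, hπmk, Submodule.Quotient.mk_eq_zero]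
          exact hz
      refine projective_of_ses' π hπsurj ih ?_ 
      rw [hker]
      exact hproj i
    exact key m hm.le


theorem extend_functional {k B C D : Type*} [CommRing k]
    [AddCommGroup B] [Module k B] [AddCommGroup C] [Module k C]
    [AddCommGroup D] [Module k D]
    (β : B →ₗ[k] C) (γ : C →ₗ[k] D) (hγ : Function.Surjective γ)
    (hexact : LinearMap.range β = LinearMap.ker γ)
    (pB : Submodule k B) (pC : Submodule k C) (pD : Submodule k D)
    (hβp : pC.comap β = pB) (hγp : pC.map γ = pD)
    (hproj : Module.Projective k (D ⧸ pD))
    (h : B →ₗ[k] k) (hh : pB ≤ LinearMap.ker h) :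
    ∃ g : C →ₗ[k] k, pC ≤ LinearMap.ker g ∧ g ∘ₗ β = h := by
  haveI := hproj
  set βq : (B ⧸ pB) →ₗ[k] (C ⧸ pC) :=
    pB.mapQ pC β (fun x hx => by rw [← hβp] at hx; exact hx) with hβq
  set γq : (C ⧸ pC) →ₗ[k] (D ⧸ pD) :=
    pC.mapQ pD γ (fun x hx => by rw [← hγp]; exact Submodule.mem_map_of_mem hx) with hγq
  have hβqmk : ∀ b : B, βq (Submodule.Quotient.mk b) = Submodule.Quotient.mk (β b) :=
    fun b => rfl
  have hγqmk : ∀ c : C, γq (Submodule.Quotient.mk c) = Submodule.Quotient.mk (γ c) :=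
    fun c => rfl
  have hβqinj : Function.Injective βq := by
    intro x y hxy
    obtain ⟨b, rfl⟩ := Submodule.Quotient.mk_surjective _ x
    obtain ⟨b', rfl⟩ := Submodule.Quotient.mk_surjective _ y
    rw [hβqmk, hβqmk, Submodule.Quotient.eq] at hxy
    rw [Submodule.Quotient.eq]
    rw [← hβp]
    show β (b - b') ∈ pC
    rw [map_sub]
    exact hxy
  have hγqsurj : Function.Surjective γq := by
    intro y
    obtain ⟨d, rfl⟩ := Submodule.Quotient.mk_surjective _ y
    obtain ⟨c, rfl⟩ := hγ d
    exact ⟨Submodule.Quotient.mk c, hγqmk c⟩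
  have hexq : LinearMap.range βq = LinearMap.ker γq := by
    ext x
    obtain ⟨c, rfl⟩ := Submodule.Quotient.mk_surjective _ x
    constructor
    · rintro ⟨y, hy⟩
      obtain ⟨b, rfl⟩ := Submodule.Quotient.mk_surjective _ y
      rw [hβqmk] at hy
      rw [LinearMap.mem_ker, ← hy, hγqmk, Submodule.Quotient.mk_eq_zero, ← hγp]
      have : γ (β b) = 0 := by
        have : β b ∈ LinearMap.ker γ := hexact ▸ LinearMap.mem_range_self β b
        exact this
      rw [this]
      exact Submodule.zero_mem _
    · intro hc
      rw [LinearMap.mem_ker, hγqmk, Submodule.Quotient.mk_eq_zero, ← hγp] at hc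
      obtain ⟨y, hy, hyc⟩ := hc
      have : c - y ∈ LinearMap.ker γ := by
        rw [LinearMap.mem_ker, map_sub, hyc, sub_self]
      rw [← hexact] at this
      obtain ⟨b, hb⟩ := this
      refine ⟨Submodule.Quotient.mk b, ?_⟩
      rw [hβqmk, Submodule.Quotient.eq, hb]
      simpa using hy
  obtain ⟨s, hs⟩ := Module.projective_lifting_property γq LinearMap.id hγqsurj
  have hmem : ∀ x : C ⧸ pC, x - s (γq x) ∈ LinearMap.range βq := fun x => by
    rw [hexq, LinearMap.mem_ker, map_sub]
    have := LinearMap.congr_fun hs (γq x)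
    simp only [LinearMap.coe_comp, Function.comp_apply, LinearMap.id_apply] at this
    rw [this, sub_self]
  set ρ : (C ⧸ pC) →ₗ[k] (B ⧸ pB) :=
    ((LinearEquiv.ofInjective βq hβqinj).symm : LinearMap.range βq →ₗ[k] (B ⧸ pB)) ∘ₗ
      LinearMap.codRestrict _ (LinearMap.id - s ∘ₗ γq) hmem with hρ
  have hρβ : ∀ b : B ⧸ pB, ρ (βq b) = b := by
    intro b
    have h1 : (LinearMap.codRestrict _ (LinearMap.id - s ∘ₗ γq) hmem) (βq b)
        = ⟨βq b, LinearMap.mem_range_self βq b⟩ := by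
      apply Subtype.ext
      show βq b - s (γq (βq b)) = βq b
      have : γq (βq b) = 0 := by
        have : βq b ∈ LinearMap.ker γq := hexq ▸ LinearMap.mem_range_self βq b
        exact this
      rw [this, map_zero, sub_zero]
    have h2 : (⟨βq b, LinearMap.mem_range_self βq b⟩ : LinearMap.range βq)
        = LinearEquiv.ofInjective βq hβqinj b := rfl
    rw [hρ, LinearMap.comp_apply, h1, h2]
    simp
  set hq : (B ⧸ pB) →ₗ[k] k := pB.liftQ h hh with hhq
  refine ⟨(hq ∘ₗ ρ) ∘ₗ pC.mkQ, ?_, ?_⟩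
  · intro x hx
    rw [LinearMap.mem_ker, LinearMap.comp_apply, Submodule.mkQ_apply]
    have : (Submodule.Quotient.mk x : C ⧸ pC) = 0 := (Submodule.Quotient.mk_eq_zero _).2 hx
    rw [this, map_zero]
  · ext b
    rw [LinearMap.comp_apply, LinearMap.comp_apply, LinearMap.comp_apply, Submodule.mkQ_apply]
    have : (Submodule.Quotient.mk (β b) : C ⧸ pC) = βq (Submodule.Quotient.mk b) :=
      (hβqmk b).symm
    rw [this, hρβ, hhq, Submodule.liftQ_apply]

/-- Let `0 → B → C → D → 0` be a strict exact sequence of filtered `A`-modules lying in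
`AF_A`.  Then the dual sequence `0 → D* → C* → B* → 0` is exact, and strict for the
induced filtrations `F^n(X*) = (X/F^{1-n}X)*` (annihilators of the `F^{1-n} X`). -/
theorem dual_of_strict_exact_sequence
    (k A : Type) [CommRing k] [IsNoetherianRing k] [CommRing A] [Algebra k A]
    (B C D : Type) [AddCommGroup B] [Module k B] [Module A B] [IsScalarTower k A B]
    [AddCommGroup C] [Module k C] [Module A C] [IsScalarTower k A C]
    [AddCommGroup D] [Module k D] [Module A D] [IsScalarTower k A D]
    (FA : ℤ → Ideal A) (hFAanti : Antitone FA) (hFA0 : ∀ m : ℤ, m ≤ 0 → FA m = ⊤)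
    (hFAmul : ∀ m n : ℤ, FA m * FA n ≤ FA (m + n))
    (FB : ℤ → Submodule A B) (FC : ℤ → Submodule A C) (FD : ℤ → Submodule A D)
    (hFB : ∀ m n : ℤ, FA m • FB n ≤ FB (m + n))
    (hFC : ∀ m n : ℤ, FA m • FC n ≤ FC (m + n))
    (hFD : ∀ m n : ℤ, FA m • FD n ≤ FD (m + n))
    (hAFB : IsAF k FB) (hAFC : IsAF k FC) (hAFD : IsAF k FD)
    (β : B →ₗ[A] C) (γ : C →ₗ[A] D)
    (hβ : Function.Injective β) (hγ : Function.Surjective γ)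
    (hexact : LinearMap.range β = LinearMap.ker γ)
    (hstrictβ : ∀ n, (FC n).comap β = FB n)
    (hstrictγ : ∀ n, (FC n).map γ = FD n) :
    Function.Injective ((γ.restrictScalars k).dualMap) ∧
    Function.Surjective ((β.restrictScalars k).dualMap) ∧
    LinearMap.range ((γ.restrictScalars k).dualMap) =
      LinearMap.ker ((β.restrictScalars k).dualMap) ∧
    (∀ n : ℤ,
      (((FD (1 - n)).restrictScalars k).dualAnnihilator).map
          ((γ.restrictScalars k).dualMap) =
        LinearMap.range ((γ.restrictScalars k).dualMap) ⊓
          ((FC (1 - n)).restrictScalars k).dualAnnihilator) ∧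
    (∀ n : ℤ,
      (((FC (1 - n)).restrictScalars k).dualAnnihilator).map
          ((β.restrictScalars k).dualMap) =
        ((FB (1 - n)).restrictScalars k).dualAnnihilator) := by
  have hγk : Function.Surjective ⇑(γ.restrictScalars k) := hγ
  have hexk : LinearMap.range (β.restrictScalars k) = LinearMap.ker (γ.restrictScalars k) := by
    ext x
    constructor
    · rintro ⟨b, rfl⟩
      show γ (β b) = 0
      have : β b ∈ LinearMap.ker γ := hexact ▸ LinearMap.mem_range_self β b
      exact this
    · intro hx
      have : x ∈ LinearMap.range β := by
        rw [hexact]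
        exact hx
      obtain ⟨b, rfl⟩ := this
      exact ⟨b, rfl⟩
  have hβp : ∀ m : ℤ, ((FC m).restrictScalars k).comap (β.restrictScalars k)
      = (FB m).restrictScalars k := by
    intro m
    ext b
    simp only [Submodule.mem_comap, LinearMap.coe_restrictScalars,
      Submodule.restrictScalars_mem]
    rw [← hstrictβ m]
    exact Submodule.mem_comap.symm
  have hγp : ∀ m : ℤ, ((FC m).restrictScalars k).map (γ.restrictScalars k)
      = (FD m).restrictScalars k := by
    intro m
    ext d
    simp only [Submodule.mem_map, LinearMap.coe_restrictScalars,
      Submodule.restrictScalars_mem]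
    rw [← hstrictγ m]
    exact (Submodule.mem_map (f := γ)).symm
  have hprojD : ∀ m : ℤ, Module.Projective k (D ⧸ (FD m).restrictScalars k) := by
    obtain ⟨hanti, ⟨n0, h0⟩, -, hgr⟩ := hAFD
    intro m
    refine proj_quot (fun n => (FD n).restrictScalars k)
      (fun a b hab x hx => hanti hab hx) n0
      (fun n hn => by
        show Submodule.restrictScalars k (FD n) = ⊤
        rw [h0 n hn, Submodule.restrictScalars_top]) ?_ m
    intro n
    exact proj_piece (FD n) (FD (n + 1)) (hgr n).2
  -- Part 1: injectivity of γ*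
  have h1 : Function.Injective ((γ.restrictScalars k).dualMap) := by
    intro f g hfg
    ext d
    obtain ⟨c, rfl⟩ := hγ d
    exact LinearMap.congr_fun hfg c
  -- Part 3: exactness
  have h3 : LinearMap.range ((γ.restrictScalars k).dualMap) =
      LinearMap.ker ((β.restrictScalars k).dualMap) := by
    apply le_antisymm
    · rintro _ ⟨f, rfl⟩
      rw [LinearMap.mem_ker]
      ext b
      show f (γ (β b)) = 0
      have : β b ∈ LinearMap.ker γ := hexact ▸ LinearMap.mem_range_self β b
      rw [show γ (β b) = 0 from this, map_zero]
    · intro g hg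
      rw [LinearMap.mem_ker] at hg
      have hle : LinearMap.ker (γ.restrictScalars k) ≤ LinearMap.ker g := by
        intro x hx
        rw [← hexk] at hx
        obtain ⟨b, rfl⟩ := hx
        exact LinearMap.congr_fun hg b
      set e := (γ.restrictScalars k).quotKerEquivOfSurjective hγk with he
      refine ⟨((LinearMap.ker (γ.restrictScalars k)).liftQ g hle) ∘ₗ
        (e.symm : D →ₗ[k] (C ⧸ LinearMap.ker (γ.restrictScalars k))), ?_⟩
      ext c
      show ((LinearMap.ker (γ.restrictScalars k)).liftQ g hle) (e.symm (γ c)) = g c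
      have hec : e (Submodule.Quotient.mk c) = γ c := rfl
      rw [← hec, LinearEquiv.symm_apply_apply, Submodule.liftQ_apply]
  -- Part 4: strictness for γ*
  have h4 : ∀ n : ℤ,
      (((FD (1 - n)).restrictScalars k).dualAnnihilator).map
          ((γ.restrictScalars k).dualMap) =
        LinearMap.range ((γ.restrictScalars k).dualMap) ⊓
          ((FC (1 - n)).restrictScalars k).dualAnnihilator := by
    intro n
    apply le_antisymm
    · rintro _ ⟨f, hf, rfl⟩
      rw [SetLike.mem_coe, Submodule.mem_dualAnnihilator] at hf
      refine Submodule.mem_inf.2 ⟨LinearMap.mem_range_self _ f, ?_⟩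
      rw [Submodule.mem_dualAnnihilator]
      intro c hc
      have hc' : (c : C) ∈ FC (1 - n) := hc
      have : γ c ∈ FD (1 - n) := by
        rw [← hstrictγ (1 - n)]
        exact Submodule.mem_map_of_mem hc'
      exact hf (γ c) this
    · rintro g hgm
      obtain ⟨⟨f, rfl⟩, hg⟩ := Submodule.mem_inf.1 hgm
      refine ⟨f, ?_, rfl⟩
      rw [Submodule.mem_dualAnnihilator] at hg
      rw [SetLike.mem_coe, Submodule.mem_dualAnnihilator]
      intro d hd
      have : d ∈ Submodule.map γ (FC (1 - n)) := by
        rw [hstrictγ (1 - n)]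
        exact hd
      obtain ⟨c, hc, rfl⟩ := this
      exact hg c hc
  -- Part 5: strictness for β*
  have h5 : ∀ n : ℤ,
      (((FC (1 - n)).restrictScalars k).dualAnnihilator).map
          ((β.restrictScalars k).dualMap) =
        ((FB (1 - n)).restrictScalars k).dualAnnihilator := by
    intro n
    apply le_antisymm
    · rintro _ ⟨g, hgann, rfl⟩
      rw [SetLike.mem_coe, Submodule.mem_dualAnnihilator] at hgann
      rw [Submodule.mem_dualAnnihilator]
      intro b hb
      have hb' : β b ∈ FC (1 - n) := by
        have : b ∈ (FC (1 - n)).comap β := by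
          rw [hstrictβ]
          exact hb
        exact this
      exact hgann (β b) hb'
    · intro h hm
      rw [Submodule.mem_dualAnnihilator] at hm
      have hh : ((FB (1 - n)).restrictScalars k) ≤ LinearMap.ker h := fun b hb => hm b hb
      obtain ⟨g, hg1, hg2⟩ := extend_functional (β.restrictScalars k) (γ.restrictScalars k)
        hγk hexk _ _ _ (hβp (1 - n)) (hγp (1 - n)) (hprojD (1 - n)) h hh
      refine ⟨g, ?_, ?_⟩
      · rw [SetLike.mem_coe, Submodule.mem_dualAnnihilator]
        exact fun c hc => hg1 hc
      · rw [LinearMap.dualMap_apply']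
        exact hg2
  -- Part 2: surjectivity of β*
  have h2 : Function.Surjective ((β.restrictScalars k).dualMap) := by
    obtain ⟨-, -, ⟨n1B, hB⟩, -⟩ := hAFB
    obtain ⟨-, -, ⟨n1C, hC⟩, -⟩ := hAFC
    intro h
    set m := max n1B n1C with hmdef
    have hmem : h ∈ ((FB (1 - (1 - m))).restrictScalars k).dualAnnihilator := by
      rw [show (1 : ℤ) - (1 - m) = m by ring, hB m (le_max_left _ _),
        Submodule.restrictScalars_bot, Submodule.dualAnnihilator_bot]
      trivial
    rw [← h5 (1 - m)] at hmem
    obtain ⟨g, -, hg⟩ := hmem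
    exact ⟨g, hg⟩
  exact ⟨h1, h2, h3, h4, h5⟩
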